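/- Let X = ∏_{i=1}^n [0, u_i] ⊆ ℝ^n be an axis-aligned box and f : X → ℝ. Then f is weakly DR-submodular if and only if for all x ≤ y in X and every z ∈ ℝ^n with z ≥ 0, z_i = 0 for every coordinate i with y_i > x_i, and x + z ∈ X, y + z ∈ X, one has f(x + z) − f(x) ≥ f(y + z) − f(y). -/

import Mathlib

/-- A function `f` on a subset `X ⊆ ℝ^n` is weakly DR-submodular if for all `x ≤ y` in `X`,
every coordinate `i` with `x i = y i`, and every `k ≥ 0` keeping both points in `X`,
`f (x + k eᵢ) - f x ≥ f (y + k eᵢ) - f y`. -/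
def WeaklyDRSubmodularOn {n : ℕ} (X : Set (Fin n → ℝ)) (f : (Fin n → ℝ) → ℝ) : Prop :=
  ∀ ⦃x y : Fin n → ℝ⦄, x ∈ X → y ∈ X → x ≤ y →
    ∀ i : Fin n, x i = y i → ∀ k : ℝ, 0 ≤ k →
      x + Pi.single i k ∈ X → y + Pi.single i k ∈ X →
        f (x + Pi.single i k) - f x ≥ f (y + Pi.single i k) - f y

lemma weaklyDR_aux {n : ℕ} (u : Fin n → ℝ) (f : (Fin n → ℝ) → ℝ)
    (h : WeaklyDRSubmodularOn (Set.Icc 0 u) f) (s : Finset (Fin n)) :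
    ∀ x y : Fin n → ℝ, x ∈ Set.Icc 0 u → y ∈ Set.Icc 0 u → x ≤ y →
      ∀ z : Fin n → ℝ, 0 ≤ z → (∀ i : Fin n, x i < y i → z i = 0) →
        (∀ i ∉ s, z i = 0) →
        x + z ∈ Set.Icc 0 u → y + z ∈ Set.Icc 0 u →
          f (x + z) - f x ≥ f (y + z) - f y := by
  induction s using Finset.induction_on with
  | empty =>
    intro x y hx hy hxy z hz hzsupp hzs hxz hyz
    have : z = 0 := funext fun i => hzs i (Finset.notMem_empty i)
    simp [this]
  | @insert a s ha ih =>
    intro x y hx hy hxy z hz hzsupp hzs hxz hyz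
    set z' : Fin n → ℝ := Function.update z a 0 with hz'def
    have hz'le : z' ≤ z := by
      intro i
      by_cases hi : i = a
      · rw [hi]; simpa [z'] using hz a
      · simp [z', hi]
    have hz'0 : 0 ≤ z' := by
      intro i
      by_cases hi : i = a
      · rw [hi]; simp [z']
      · simp [z', hi]; exact hz i
    have hz'supp : ∀ i : Fin n, x i < y i → z' i = 0 := by
      intro i hi
      by_cases h' : i = a
      · rw [h']; simp [z']
      · simp [z', h']; exact hzsupp i hi
    have hz's : ∀ i ∉ s, z' i = 0 := by
      intro i hi
      by_cases h' : i = a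
      · rw [h']; simp [z']
      · simp [z', h']
        exact hzs i (by simp [hi, h'])
    have hxz' : x + z' ∈ Set.Icc 0 u :=
      ⟨fun i => le_trans (hx.1 i) (le_add_of_nonneg_right (hz'0 i)),
       le_trans (fun i => add_le_add_right (hz'le i) _) hxz.2⟩
    have hyz' : y + z' ∈ Set.Icc 0 u :=
      ⟨fun i => le_trans (hy.1 i) (le_add_of_nonneg_right (hz'0 i)),
       le_trans (fun i => add_le_add_right (hz'le i) _) hyz.2⟩
    have hdecomp : ∀ w : Fin n → ℝ, w + z = (w + z') + Pi.single a (z a) := by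
      intro w; funext i
      by_cases hi : i = a
      · rw [hi]; simp [z']
      · simp [z', hi, Function.update_of_ne hi]
    have step : f ((x + z') + Pi.single a (z a)) - f (x + z') ≥
        f ((y + z') + Pi.single a (z a)) - f (y + z') := by
      by_cases hxa : x a = y a
      · have hle : x + z' ≤ y + z' := fun i => add_le_add_left (hxy i) _
        have heq : (x + z') a = (y + z') a := by simp [hxa]
        have h1 : (x + z') + Pi.single a (z a) ∈ Set.Icc 0 u := hdecomp x ▸ hxz
        have h2 : (y + z') + Pi.single a (z a) ∈ Set.Icc 0 u := hdecomp y ▸ hyz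
        exact h hxz' hyz' hle a heq (z a) (hz a) h1 h2
      · have hlt : x a < y a := lt_of_le_of_ne (hxy a) hxa
        have : z a = 0 := hzsupp a hlt
        simp [this]
    have ihx : f (x + z') - f x ≥ f (y + z') - f y :=
      ih x y hx hy hxy z' hz'0 hz'supp hz's hxz' hyz'
    have ex : f (x + z) = f ((x + z') + Pi.single a (z a)) := by rw [hdecomp x]
    have ey : f (y + z) = f ((y + z') + Pi.single a (z a)) := by rw [hdecomp y]
    rw [ex, ey]; linarith

theorem weaklyDRSubmodular_iff_group {n : ℕ} (u : Fin n → ℝ) (f : (Fin n → ℝ) → ℝ) :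
    WeaklyDRSubmodularOn (Set.Icc 0 u) f ↔
      ∀ x y : Fin n → ℝ, x ∈ Set.Icc 0 u → y ∈ Set.Icc 0 u → x ≤ y →
        ∀ z : Fin n → ℝ, 0 ≤ z → (∀ i : Fin n, x i < y i → z i = 0) →
          x + z ∈ Set.Icc 0 u → y + z ∈ Set.Icc 0 u →
            f (x + z) - f x ≥ f (y + z) - f y := by
  constructor
  · intro h x y hx hy hxy z hz hzsupp hxz hyz
    exact weaklyDR_aux u f h Finset.univ x y hx hy hxy z hz hzsupp
      (fun i hi => absurd (Finset.mem_univ i) hi) hxz hyz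
  · intro h x y hx hy hxy i hix k hk h1 h2
    refine h x y hx hy hxy (Pi.single i k) ?_ ?_ h1 h2
    · intro j
      by_cases hj : j = i
      · subst hj; simpa using hk
      · simp [Pi.single_eq_of_ne hj]
    · intro j hj
      by_cases hji : j = i
      · subst hji; exact absurd hix (ne_of_lt hj)
      · simp [Pi.single_eq_of_ne hji]
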